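/- arXiv:2009.13288 — 3 statements merged into one kernel-verified Lean document; each statement's English description precedes it below -/
import Mathlib

section
/- Let V be a K×K positive semi-definite Hermitian matrix with pseudo-inverse V⁻¹, and let q be a vector in ℂ^K satisfying V⁻¹ V q = q (i.e., q lies in the range of V). For λ > 0, let W := V + λ·I. Then the Euclidean distance between the pseudo-inverse solutions satisfies ‖V⁻¹ q − W⁻¹ q‖ ≤ λ · ‖V⁻¹‖² · ‖q‖, where ‖·‖ denotes the operator (spectral) norm for matrices and the ℓ2 norm for vectors. -/
open Matrix
open scoped Matrix.Norms.L2Operator ComplexOrder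

/-- The four Penrose equations characterizing the Moore–Penrose pseudo-inverse. -/
def IsMoorePenrose {m n : Type*} [Fintype m] [Fintype n] [DecidableEq m] [DecidableEq n]
    (A : Matrix m n ℂ) (B : Matrix n m ℂ) : Prop :=
  A * B * A = A ∧ B * A * B = B ∧ (A * B)ᴴ = A * B ∧ (B * A)ᴴ = B * A

/-- Uniqueness of the Moore–Penrose pseudo-inverse. -/
lemma mp_unique {n : Type*} [Fintype n] [DecidableEq n] {A B C : Matrix n n ℂ}
    (hB : IsMoorePenrose A B) (hC : IsMoorePenrose A C) : B = C := by
  obtain ⟨hB1, hB2, hB3, hB4⟩ := hB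
  obtain ⟨hC1, hC2, hC3, hC4⟩ := hC
  have hAB : A * B = A * C := by
    calc A * B = (A * C * A) * B := by rw [hC1]
    _ = (A * C) * (A * B) := by simp only [Matrix.mul_assoc]
    _ = (A * C)ᴴ * (A * B)ᴴ := by rw [hC3, hB3]
    _ = ((A * B) * (A * C))ᴴ := (conjTranspose_mul _ _).symm
    _ = ((A * B * A) * C)ᴴ := by simp only [Matrix.mul_assoc]
    _ = (A * C)ᴴ := by rw [hB1]
    _ = A * C := hC3
  have hBA : B * A = C * A := by
    calc B * A = B * (A * C * A) := by rw [hC1]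
    _ = (B * A) * (C * A) := by simp only [Matrix.mul_assoc]
    _ = (B * A)ᴴ * (C * A)ᴴ := by rw [hB4, hC4]
    _ = ((C * A) * (B * A))ᴴ := (conjTranspose_mul _ _).symm
    _ = (C * (A * B * A))ᴴ := by simp only [Matrix.mul_assoc]
    _ = (C * A)ᴴ := by rw [hB1]
    _ = C * A := hC4
  calc B = B * A * B := hB2.symm
  _ = B * (A * C) := by rw [Matrix.mul_assoc, hAB]
  _ = (B * A) * C := by rw [Matrix.mul_assoc]
  _ = C * A * C := by rw [hBA]
  _ = C := hC2

/-- The conjugate transpose of a Moore–Penrose inverse of a Hermitian matrix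
is again a Moore–Penrose inverse. -/
lemma mp_conjTranspose {n : Type*} [Fintype n] [DecidableEq n] {A B : Matrix n n ℂ}
    (hA : Aᴴ = A) (hB : IsMoorePenrose A B) : IsMoorePenrose A Bᴴ := by
  obtain ⟨h1, h2, h3, h4⟩ := hB
  refine ⟨?_, ?_, ?_, ?_⟩
  · have e := congrArg conjTranspose h1
    simp only [conjTranspose_mul, hA, Matrix.mul_assoc] at e ⊢
    exact e
  · have e := congrArg conjTranspose h2
    simp only [conjTranspose_mul, hA, Matrix.mul_assoc] at e ⊢
    exact e
  · calc (A * Bᴴ)ᴴ = B * A := by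
          rw [conjTranspose_mul, conjTranspose_conjTranspose, hA]
    _ = (B * A)ᴴ := h4.symm
    _ = A * Bᴴ := by rw [conjTranspose_mul, hA]
  · calc (Bᴴ * A)ᴴ = A * B := by
          rw [conjTranspose_mul, conjTranspose_conjTranspose, hA]
    _ = (A * B)ᴴ := h3.symm
    _ = Bᴴ * A := by rw [conjTranspose_mul, hA]

/-- Squared operator norm of a column matrix. -/
lemma col_norm_sq {K : ℕ} (x : Matrix (Fin K) (Fin 1) ℂ) :
    ‖x‖ ^ 2 = ∑ i, Complex.normSq (x i 0) := by
  have h1 : ‖x‖ ^ 2 = ‖xᴴ * x‖ := by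
    rw [sq]; exact (Matrix.l2_opNorm_conjTranspose_mul_self x).symm
  have h2 : xᴴ * x
      = ((∑ i, Complex.normSq (x i 0) : ℝ) : ℂ) • (1 : Matrix (Fin 1) (Fin 1) ℂ) := by
    ext i j
    fin_cases i; fin_cases j
    simp only [Matrix.mul_apply, conjTranspose_apply, Matrix.smul_apply, Matrix.one_apply_eq,
      smul_eq_mul, mul_one]
    push_cast
    refine Finset.sum_congr rfl fun k _ => ?_
    rw [Complex.normSq_eq_conj_mul_self]
    rfl
  have hone : ‖(1 : Matrix (Fin 1) (Fin 1) ℂ)‖ = 1 := by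
    have := Matrix.l2_opNorm_conjTranspose_mul_self (1 : Matrix (Fin 1) (Fin 1) ℂ)
    simp only [conjTranspose_one, mul_one] at this
    have hpos : (0:ℝ) < ‖(1 : Matrix (Fin 1) (Fin 1) ℂ)‖ := by
      rw [norm_pos_iff]; exact one_ne_zero
    nlinarith
  rw [h1, h2, norm_smul, hone, mul_one, Complex.norm_real, Real.norm_eq_abs, abs_of_nonneg]
  exact Finset.sum_nonneg fun i _ => Complex.normSq_nonneg _

/-- Adding `lam • 1` to a PSD matrix does not decrease the image norm. -/
lemma contraction_aux {K : ℕ} {V : Matrix (Fin K) (Fin K) ℂ} (hV : V.PosSemidef)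
    {lam : ℝ} (hlam : 0 < lam) (y : Matrix (Fin K) (Fin 1) ℂ) :
    ‖V * y‖ ≤ ‖(V + (lam : ℂ) • (1 : Matrix (Fin K) (Fin K) ℂ)) * y‖ := by
  have hsq : ‖V * y‖ ^ 2 ≤ ‖(V + (lam : ℂ) • (1 : Matrix (Fin K) (Fin K) ℂ)) * y‖ ^ 2 := by
    rw [col_norm_sq, col_norm_sq]
    set u : Fin K → ℂ := fun i => y i 0 with hu
    have hVy : ∀ i, (V * y) i 0 = (V *ᵥ u) i := by
      intro i
      simp [Matrix.mul_apply, Matrix.mulVec, dotProduct, hu]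
    have hWy : ∀ i, ((V + (lam : ℂ) • (1 : Matrix (Fin K) (Fin K) ℂ)) * y) i 0
        = (V *ᵥ u) i + (lam : ℂ) * u i := by
      intro i
      rw [Matrix.add_mul, Matrix.smul_mul, Matrix.one_mul]
      simp [hVy i, hu]
    simp only [hVy, hWy]
    have hd := hV.dotProduct_mulVec_nonneg u
    rw [Complex.nonneg_iff] at hd
    have hre : 0 ≤ (∑ i, (V *ᵥ u) i * (starRingEnd ℂ) ((lam : ℂ) * u i)).re := by
      have heq : (∑ i, (V *ᵥ u) i * (starRingEnd ℂ) ((lam : ℂ) * u i))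
          = (lam : ℂ) * (star u ⬝ᵥ (V *ᵥ u)) := by
        rw [dotProduct, Finset.mul_sum]
        refine Finset.sum_congr rfl fun i _ => ?_
        rw [_root_.map_mul, Complex.conj_ofReal]
        simp only [Pi.star_apply, Complex.star_def]
        ring
      rw [heq, Complex.mul_re, Complex.ofReal_re, Complex.ofReal_im]
      nlinarith [hd.1]
    have hsum : ∑ i, Complex.normSq ((V *ᵥ u) i + (lam : ℂ) * u i)
        = ∑ i, (Complex.normSq ((V *ᵥ u) i) + (Complex.normSq ((lam : ℂ) * u i)
            + 2 * (((V *ᵥ u) i) * (starRingEnd ℂ) ((lam : ℂ) * u i)).re)) := by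
      refine Finset.sum_congr rfl fun i _ => ?_
      rw [Complex.normSq_add]
      ring
    rw [hsum, Finset.sum_add_distrib, Finset.sum_add_distrib]
    have h2 : ∑ i, 2 * (((V *ᵥ u) i) * (starRingEnd ℂ) ((lam : ℂ) * u i)).re
        = 2 * (∑ i, ((V *ᵥ u) i) * (starRingEnd ℂ) ((lam : ℂ) * u i)).re := by
      rw [← Finset.mul_sum, Complex.re_sum]
    have h0 : 0 ≤ ∑ i, Complex.normSq ((lam : ℂ) * u i) :=
      Finset.sum_nonneg fun i _ => Complex.normSq_nonneg _
    rw [h2]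
    linarith
  have h1 := Real.sqrt_le_sqrt hsq
  rwa [Real.sqrt_sq (norm_nonneg _), Real.sqrt_sq (norm_nonneg _)] at h1

/-- Perturbing a PSD matrix by `λ • I` moves the pseudo-inverse solution by at most
`λ ‖V⁻¹‖² ‖q‖`, provided `q` lies in the range of `V`. -/
theorem stmt0 {K : ℕ} (V Vinv : Matrix (Fin K) (Fin K) ℂ)
    (hV : V.PosSemidef) (hVinv : IsMoorePenrose V Vinv)
    (q : Matrix (Fin K) (Fin 1) ℂ) (hq : Vinv * V * q = q)
    (lam : ℝ) (hlam : 0 < lam)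
    (W : Matrix (Fin K) (Fin K) ℂ) (hW : W = V + (lam : ℂ) • (1 : Matrix (Fin K) (Fin K) ℂ)) :
    ‖Vinv * q - W⁻¹ * q‖ ≤ lam * ‖Vinv‖ ^ 2 * ‖q‖ := by
  have hVh : Vᴴ = V := hV.1
  -- Vinv is Hermitian
  have hsymm : Vinvᴴ = Vinv := mp_unique (mp_conjTranspose hVh hVinv) hVinv
  -- V and Vinv commute
  have hcomm : Vinv * V = V * Vinv := by
    calc Vinv * V = (Vinv * V)ᴴ := hVinv.2.2.2.symm
    _ = Vᴴ * Vinvᴴ := conjTranspose_mul _ _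
    _ = V * Vinv := by rw [hVh, hsymm]
  -- W is positive definite, hence invertible
  have hsmul : ((lam : ℂ) • (1 : Matrix (Fin K) (Fin K) ℂ)).PosDef := by
    refine Matrix.PosDef.of_dotProduct_mulVec_pos ?_ ?_
    · unfold Matrix.IsHermitian
      rw [conjTranspose_smul, conjTranspose_one, Complex.star_def, Complex.conj_ofReal]
    · intro x hx
      rw [smul_mulVec, one_mulVec, dotProduct_smul]
      have hxpos : 0 < star x ⬝ᵥ x := by
        rw [Matrix.dotProduct_star_self_pos_iff]
        exact hx
      have hlam' : (0 : ℂ) < (lam : ℂ) := by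
        rw [Complex.zero_lt_real]; exact hlam
      calc (0 : ℂ) = (lam : ℂ) * 0 := by ring
      _ < (lam : ℂ) * (star x ⬝ᵥ x) := by
        exact mul_lt_mul_of_pos_left hxpos hlam'
  have hWpd : W.PosDef := by rw [hW]; exact Matrix.PosDef.posSemidef_add hV hsmul
  have hdet : IsUnit W.det := (Matrix.isUnit_iff_isUnit_det W).mp hWpd.isUnit
  have hWWi : W * W⁻¹ = 1 := Matrix.mul_nonsing_inv W hdet
  have hWiW : W⁻¹ * W = 1 := Matrix.nonsing_inv_mul W hdet
  set y := W⁻¹ * q with hy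
  -- the projection Vinv * V commutes with W
  have hWP : W * (Vinv * V) = (Vinv * V) * W := by
    rw [hW, Matrix.add_mul, Matrix.mul_add, Matrix.smul_mul, Matrix.mul_smul,
      Matrix.one_mul, Matrix.mul_one]
    congr 1
    calc V * (Vinv * V) = V * Vinv * V := by rw [Matrix.mul_assoc]
    _ = V := hVinv.1
    _ = V * Vinv * V := hVinv.1.symm
    _ = Vinv * V * V := by rw [hcomm]
  have hPWi : (Vinv * V) * W⁻¹ = W⁻¹ * (Vinv * V) := by
    calc (Vinv * V) * W⁻¹ = W⁻¹ * (W * ((Vinv * V) * W⁻¹)) := by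
          rw [← Matrix.mul_assoc, ← Matrix.mul_assoc, hWiW, Matrix.one_mul]
    _ = W⁻¹ * (((Vinv * V) * W) * W⁻¹) := by rw [← Matrix.mul_assoc W, hWP]
    _ = W⁻¹ * (Vinv * V) := by
          rw [Matrix.mul_assoc (Vinv * V), hWWi, Matrix.mul_one]
  have hy1 : Vinv * V * y = y := by
    calc Vinv * V * y = ((Vinv * V) * W⁻¹) * q := by rw [hy, Matrix.mul_assoc (Vinv * V) W⁻¹ q]
    _ = W⁻¹ * ((Vinv * V) * q) := by rw [hPWi, Matrix.mul_assoc]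
    _ = W⁻¹ * q := by rw [hq]
    _ = y := hy.symm
  have hWyq : W * y = q := by
    rw [hy, ← Matrix.mul_assoc, hWWi, Matrix.one_mul]
  -- key identity
  have key : Vinv * q - W⁻¹ * q = (lam : ℂ) • (Vinv * (Vinv * (V * y))) := by
    have h1 : Vinv * q = y + (lam : ℂ) • (Vinv * y) := by
      calc Vinv * q = Vinv * (W * y) := by rw [hWyq]
      _ = Vinv * (V * y + (lam : ℂ) • y) := by
            rw [hW, Matrix.add_mul, Matrix.smul_mul, Matrix.one_mul]
      _ = Vinv * (V * y) + (lam : ℂ) • (Vinv * y) := by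
            rw [Matrix.mul_add, Matrix.mul_smul]
      _ = y + (lam : ℂ) • (Vinv * y) := by rw [← Matrix.mul_assoc Vinv V y, hy1]
    have h2 : Vinv * (Vinv * (V * y)) = Vinv * y := by
      calc Vinv * (Vinv * (V * y)) = Vinv * (Vinv * V * y) := by
            rw [Matrix.mul_assoc]
      _ = Vinv * y := by rw [hy1]
    rw [h1, h2, hy]
    abel
  rw [key, norm_smul, Complex.norm_real, Real.norm_eq_abs, abs_of_pos hlam]
  have hb1 : ‖Vinv * (Vinv * (V * y))‖ ≤ ‖Vinv‖ * (‖Vinv‖ * ‖V * y‖) := by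
    calc ‖Vinv * (Vinv * (V * y))‖ ≤ ‖Vinv‖ * ‖Vinv * (V * y)‖ :=
          Matrix.l2_opNorm_mul _ _
    _ ≤ ‖Vinv‖ * (‖Vinv‖ * ‖V * y‖) := by
          have := Matrix.l2_opNorm_mul Vinv (V * y)
          exact mul_le_mul_of_nonneg_left this (norm_nonneg _)
  have hb2 : ‖V * y‖ ≤ ‖q‖ := by
    have := contraction_aux hV hlam y
    rwa [← hW, hWyq] at this
  calc lam * ‖Vinv * (Vinv * (V * y))‖ ≤ lam * (‖Vinv‖ * (‖Vinv‖ * ‖V * y‖)) := by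
        exact mul_le_mul_of_nonneg_left hb1 (le_of_lt hlam)
  _ ≤ lam * (‖Vinv‖ * (‖Vinv‖ * ‖q‖)) := by
        have h := mul_le_mul_of_nonneg_left hb2 (norm_nonneg Vinv)
        have h' := mul_le_mul_of_nonneg_left h (norm_nonneg Vinv)
        exact mul_le_mul_of_nonneg_left h' (le_of_lt hlam)
  _ = lam * ‖Vinv‖ ^ 2 * ‖q‖ := by ring
end

section
/- Let U₁, …, U_M be unitaries on ℂ^N, U_comb := Σ_{i=1}^M |i⟩⟨i| ⊗ Uᵢ on ℂ^M ⊗ ℂ^N, and U_copy be a unitary satisfying U_copy(|i⟩⊗|0⟩) = |i⟩⊗|i⟩ for basis states |i⟩ (with M ≤ N). Define the reflection R := I − 2 Σᵢ |i⟩⟨i| ⊗ |0⟩⟨0| and Ũ_{A1} := (H^{⊗m}⊗I) U_comb R U_copy† (H^{⊗m}⊗I), Ũ_{A2} := (H^{⊗m}⊗I) U_comb U_copy† (H^{⊗m}⊗I), where M = 2^m and H^{⊗m} is the m-fold Hadamard. Then the top-left block of Ũ_{A2} − Ũ_{A1} satisfies ⟨0^m| (Ũ_{A2} − Ũ_{A1})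 |0^m⟩ = (2/M) Σ_{i=1}^M (Uᵢ|0⟩)⟨i|, i.e., it equals (2/M) times the matrix A whose i-th column is Uᵢ|0⟩. -/
open Matrix
open Kronecker

/-- The `m`-fold tensor power of the Hadamard gate, as a `2^m × 2^m` matrix:
`(H^{⊗m})_{ij} = 2^{-m/2} (−1)^{Σ_k i_k j_k}` where `i_k, j_k` are the binary digits. -/
noncomputable def hadamardPow (m : ℕ) : Matrix (Fin (2 ^ m)) (Fin (2 ^ m)) ℂ :=
  fun i j => ((Real.sqrt (2 ^ m) : ℂ))⁻¹ *
    (-1 : ℂ) ^ (∑ k ∈ Finset.range m,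
      if Nat.testBit i.val k ∧ Nat.testBit j.val k then 1 else 0 : ℕ)

/-- Block-encoding identity for the column-access input model: with
`U_comb = Σᵢ |i⟩⟨i|⊗Uᵢ`, a copy unitary `U_copy(|i⟩⊗|0⟩) = |i⟩⊗|i⟩`, the reflection
`R = I − 2Σᵢ|i⟩⟨i|⊗|0⟩⟨0|`, and `Ũ_{A1}, Ũ_{A2}` as in the paper, the top-left block of
`Ũ_{A2} − Ũ_{A1}` equals `(2/M) Σᵢ (Uᵢ|0⟩)⟨i|`. -/
theorem stmt14 (m N : ℕ) [NeZero N] (hMN : 2 ^ m ≤ N)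
    (U : Fin (2 ^ m) → Matrix (Fin N) (Fin N) ℂ)
    (hU : ∀ i, U i ∈ Matrix.unitaryGroup (Fin N) ℂ)
    (Ucomb : Matrix (Fin (2 ^ m) × Fin N) (Fin (2 ^ m) × Fin N) ℂ)
    (hUcomb : Ucomb = ∑ i : Fin (2 ^ m), Matrix.single i i (1 : ℂ) ⊗ₖ U i)
    (Ucopy : Matrix (Fin (2 ^ m) × Fin N) (Fin (2 ^ m) × Fin N) ℂ)
    (hUcopyU : Ucopy ∈ Matrix.unitaryGroup (Fin (2 ^ m) × Fin N) ℂ)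
    (hUcopy : ∀ i : Fin (2 ^ m), ∀ p : Fin (2 ^ m) × Fin N,
      Ucopy p (i, (0 : Fin N)) = if p = (i, Fin.castLE hMN i) then 1 else 0)
    (Rrefl : Matrix (Fin (2 ^ m) × Fin N) (Fin (2 ^ m) × Fin N) ℂ)
    (hR : Rrefl = 1 - (2 : ℂ) • ∑ i : Fin (2 ^ m),
      Matrix.single (i, (0 : Fin N)) (i, (0 : Fin N)) (1 : ℂ))
    (UA1 UA2 : Matrix (Fin (2 ^ m) × Fin N) (Fin (2 ^ m) × Fin N) ℂ)
    (hUA1 : UA1 = (hadamardPow m ⊗ₖ (1 : Matrix (Fin N) (Fin N) ℂ)) * Ucomb * Rrefl * Ucopyᴴ *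
      (hadamardPow m ⊗ₖ (1 : Matrix (Fin N) (Fin N) ℂ)))
    (hUA2 : UA2 = (hadamardPow m ⊗ₖ (1 : Matrix (Fin N) (Fin N) ℂ)) * Ucomb * Ucopyᴴ *
      (hadamardPow m ⊗ₖ (1 : Matrix (Fin N) (Fin N) ℂ))) :
    (fun (k l : Fin N) => (UA2 - UA1) ((0 : Fin (2 ^ m)), k) ((0 : Fin (2 ^ m)), l)) =
      fun (k l : Fin N) => (2 / (2 ^ m : ℂ)) *
        ∑ i : Fin (2 ^ m), (U i) k (0 : Fin N) * (if l = Fin.castLE hMN i then 1 else 0) := by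
  set c : ℂ := ((Real.sqrt (2 ^ m) : ℂ))⁻¹ with hc
  set A := hadamardPow m ⊗ₖ (1 : Matrix (Fin N) (Fin N) ℂ) with hA
  set S := ∑ i : Fin (2 ^ m),
      Matrix.single (i, (0 : Fin N)) (i, (0 : Fin N)) (1 : ℂ) with hS
  have hH0 : ∀ a : Fin (2^m), hadamardPow m 0 a = c := by
    intro a; simp [hadamardPow, show ((0 : Fin (2^m)) : ℕ) = 0 from rfl, Nat.zero_testBit, hc]
  have hH0' : ∀ a : Fin (2^m), hadamardPow m a 0 = c := by
    intro a; simp [hadamardPow, show ((0 : Fin (2^m)) : ℕ) = 0 from rfl, Nat.zero_testBit, hc]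
  -- key algebraic reduction
  have key : UA2 - UA1 = A * Ucomb * ((2 : ℂ) • S) * Ucopyᴴ * A := by
    rw [hUA1, hUA2, hR]
    simp [Matrix.mul_sub, Matrix.sub_mul, sub_sub_cancel]
  -- step a
  have hB : ∀ (k : Fin N) (i : Fin (2^m)) (d : Fin N),
      (A * Ucomb) ((0 : Fin (2^m)), k) (i, d) = c * U i k d := by
    intro k i d
    rw [hA, hUcomb, Matrix.mul_apply]
    simp [Fintype.sum_prod_type, Matrix.kroneckerMap_apply, Matrix.one_apply,
      Matrix.sum_apply, Matrix.single, hH0, ite_and, mul_ite, ite_mul,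
      Finset.sum_ite_eq, Finset.sum_ite_eq', Finset.mul_sum]
  -- step b
  have hC : ∀ r s : Fin (2 ^ m) × Fin N,
      (((2 : ℂ) • S) * Ucopyᴴ) r s
        = 2 * (if r.2 = (0 : Fin N) then 1 else 0) *
            (if s = (r.1, Fin.castLE hMN r.1) then 1 else 0) := by
    intro r s
    rw [hS, Matrix.mul_apply, Fintype.sum_prod_type]
    simp [Matrix.smul_apply, Matrix.sum_apply, Matrix.conjTranspose_apply,
      Matrix.single, Prod.mk.injEq, ite_and, Finset.sum_ite_eq, Finset.sum_ite_eq',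
      hUcopy, mul_ite, ite_mul, apply_ite (starRingEnd ℂ), Prod.ext_iff]
    by_cases h1 : r.2 = (0:Fin N) <;> by_cases h2 : s.1 = r.1 <;>
      by_cases h3 : s.2 = Fin.castLE hMN r.1 <;> simp [h1, h2, h3, eq_comm]
  -- A column formula
  have hA' : ∀ (a : Fin (2^m)) (b : Fin N) (l : Fin N),
      A (a, b) ((0 : Fin (2^m)), l) = c * (if b = l then 1 else 0) := by
    intro a b l
    simp [hA, Matrix.kroneckerMap_apply, Matrix.one_apply, hH0']
  have hcc : c * c = ((2 ^ m : ℂ))⁻¹ := by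
    rw [hc, ← mul_inv, ← Complex.ofReal_mul, Real.mul_self_sqrt (by positivity)]
    push_cast
    ring
  funext k l
  rw [key]
  rw [show A * Ucomb * ((2 : ℂ) • S) * Ucopyᴴ * A
      = (A * Ucomb) * (((2 : ℂ) • S) * Ucopyᴴ) * A by rw [mul_assoc (A * Ucomb)]]
  rw [Matrix.mul_apply]
  simp only [Matrix.mul_apply]
  calc (∑ s : Fin (2 ^ m) × Fin N,
        (∑ r : Fin (2 ^ m) × Fin N, (A * Ucomb) ((0 : Fin (2^m)), k) r *
          (((2 : ℂ) • S) * Ucopyᴴ) r s) * A s ((0 : Fin (2^m)), l))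
      = ∑ s : Fin (2 ^ m) × Fin N, (∑ r : Fin (2 ^ m) × Fin N,
          (c * U r.1 k r.2) * (2 * (if r.2 = (0 : Fin N) then 1 else 0) *
            (if s = (r.1, Fin.castLE hMN r.1) then 1 else 0))) *
          (c * (if s.2 = l then 1 else 0)) := by
        refine Finset.sum_congr rfl fun s _ => ?_
        rw [show A s ((0 : Fin (2^m)), l) = c * (if s.2 = l then 1 else 0) from hA' s.1 s.2 l]
        congr 1
        refine Finset.sum_congr rfl fun r _ => ?_
        rw [show (A * Ucomb) ((0 : Fin (2^m)), k) r = c * U r.1 k r.2 from hB k r.1 r.2,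
          hC r s]
    _ = (2 / (2 ^ m : ℂ)) *
        ∑ i : Fin (2 ^ m), (U i) k (0 : Fin N) * (if l = Fin.castLE hMN i then 1 else 0) := by
        rw [Fintype.sum_prod_type]
        simp only [Fintype.sum_prod_type, mul_ite, ite_mul, mul_one, mul_zero, zero_mul,
          one_mul, Finset.sum_ite_eq, Finset.sum_ite_eq', Finset.mem_univ, if_true,
          Prod.mk.injEq, ite_and, Finset.mul_sum]
        simp only [Finset.sum_ite_irrel, Finset.sum_const_zero, Finset.sum_ite_eq,
          Finset.sum_ite_eq', Finset.mem_univ, if_true]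
        refine Finset.sum_congr rfl fun x _ => ?_
        by_cases h : l = Fin.castLE hMN x <;> simp only [h, if_true, if_false, zero_mul]
        calc c * U x k 0 * 2 * c = (c * c) * (2 * U x k 0) := by ring
          _ = 2 / 2 ^ m * U x k 0 := by rw [hcc]; ring
end

section
/- Define the n×n matrix M over 𝔽₂ whose first column and diagonal entries are 1 and all other entries are 0 (so M represents the CNOT circuit consisting of CNOT_{1,j} for j = 2,…,n). Then M can be written as a product of at most 2⌈log₂ n⌉ − 1 'parallel layers', where each layer is a product of elementary row-addition matrices E_{i→j} (adding row i to row j over 𝔽₂) whose index pairs (i,j) are pairwise disjoint within the layer. -/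
open Matrix

/-- The elementary row-addition matrix over `𝔽₂`: left multiplication adds row `i` to row `j`. -/
def rowAdd (n : ℕ) (i j : Fin n) : Matrix (Fin n) (Fin n) (ZMod 2) :=
  1 + Matrix.single j i 1

/-- A matrix is a 'parallel layer' of CNOT gates if it is a product of elementary row-addition
matrices whose index pairs are pairwise disjoint. -/
def IsLayer {n : ℕ} (L : Matrix (Fin n) (Fin n) (ZMod 2)) : Prop :=
  ∃ ps : List (Fin n × Fin n),
    (∀ p ∈ ps, p.1 ≠ p.2) ∧
    ps.Pairwise (fun p q => p.1 ≠ q.1 ∧ p.1 ≠ q.2 ∧ p.2 ≠ q.1 ∧ p.2 ≠ q.2) ∧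
    L = (ps.map (fun p => rowAdd n p.1 p.2)).prod

namespace Stmt15Aux

/-- The layer matrix adding row `j` to row `j+k` for `j ∈ [lo, b)`. -/
def Lmat (n k lo b : ℕ) : Matrix (Fin n) (Fin n) (ZMod 2) :=
  fun i j => (if i = j then 1 else 0) +
    (if lo + k ≤ i.val ∧ i.val < b + k ∧ i.val = j.val + k then 1 else 0)

/-- Fanout on the first `h` rows. -/
def Mmat (n h : ℕ) [NeZero n] : Matrix (Fin n) (Fin n) (ZMod 2) :=
  fun i j => if i = j ∨ (j = 0 ∧ i.val < h) then 1 else 0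

variable {n : ℕ}

lemma rowAdd_mul_apply (u v : Fin n) (X : Matrix (Fin n) (Fin n) (ZMod 2)) (i j : Fin n) :
    (rowAdd n u v * X) i j = X i j + if i = v then X u j else 0 := by
  rw [rowAdd, add_mul, one_mul]
  rw [Matrix.add_apply]
  congr 1
  by_cases h : i = v
  · subst h
    rw [if_pos rfl, Matrix.single_mul_apply_same, one_mul]
  · rw [if_neg h, Matrix.single_mul_apply_of_ne _ _ _ _ _ h]

lemma Lmat_mul_apply (k lo b : ℕ) (X : Matrix (Fin n) (Fin n) (ZMod 2)) (i j : Fin n) :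
    (Lmat n k lo b * X) i j = X i j +
      if lo + k ≤ i.val ∧ i.val < b + k then
        X ⟨i.val - k, lt_of_le_of_lt (Nat.sub_le _ _) i.isLt⟩ j else 0 := by
  rw [Matrix.mul_apply]
  simp only [Lmat, add_mul, ite_mul, one_mul, zero_mul]
  rw [Finset.sum_add_distrib]
  congr 1
  · rw [Finset.sum_ite_eq, if_pos (Finset.mem_univ i)]
  · by_cases hP : lo + k ≤ i.val ∧ i.val < b + k
    · rw [if_pos hP]
      have hcond : ∀ a : Fin n,
          (lo + k ≤ i.val ∧ i.val < b + k ∧ i.val = a.val + k) ↔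
            (a = ⟨i.val - k, lt_of_le_of_lt (Nat.sub_le _ _) i.isLt⟩) := by
        intro a
        rw [Fin.ext_iff]
        constructor
        · intro h2; simp; omega
        · intro h2; simp at h2; omega
      calc (∑ a : Fin n, if lo + k ≤ i.val ∧ i.val < b + k ∧ i.val = a.val + k
              then X a j else 0)
          = ∑ a : Fin n, if a = ⟨i.val - k, lt_of_le_of_lt (Nat.sub_le _ _) i.isLt⟩
              then X a j else 0 := by
            apply Finset.sum_congr rfl; intro a _; rw [if_congr (hcond a) rfl rfl]
        _ = _ := by rw [Finset.sum_ite_eq', if_pos (Finset.mem_univ _)]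
    · rw [if_neg hP]
      apply Finset.sum_eq_zero
      intro a _
      rw [if_neg]
      intro hc; exact hP ⟨hc.1, hc.2.1⟩

lemma mul_Lmat_apply (k lo b : ℕ) (hb : b + k ≤ n) (X : Matrix (Fin n) (Fin n) (ZMod 2))
    (i j : Fin n) :
    (X * Lmat n k lo b) i j = X i j +
      if h' : lo ≤ j.val ∧ j.val < b then X i ⟨j.val + k, by omega⟩ else 0 := by
  rw [Matrix.mul_apply]
  simp only [Lmat, mul_add, mul_ite, mul_one, mul_zero]
  rw [Finset.sum_add_distrib]
  congr 1
  · rw [Finset.sum_ite_eq', if_pos (Finset.mem_univ j)]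
  · by_cases hP : lo ≤ j.val ∧ j.val < b
    · rw [dif_pos hP]
      have hcond : ∀ a : Fin n,
          (lo + k ≤ a.val ∧ a.val < b + k ∧ a.val = j.val + k) ↔
            (a = ⟨j.val + k, by omega⟩) := by
        intro a
        rw [Fin.ext_iff]
        constructor
        · intro h2; simp; omega
        · intro h2; simp at h2; omega
      calc (∑ a : Fin n, if lo + k ≤ a.val ∧ a.val < b + k ∧ a.val = j.val + k
              then X i a else 0)
          = ∑ a : Fin n, if a = ⟨j.val + k, by omega⟩ then X i a else 0 := by
            apply Finset.sum_congr rfl; intro a _; rw [if_congr (hcond a) rfl rfl]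
        _ = _ := by rw [Finset.sum_ite_eq', if_pos (Finset.mem_univ _)]
    · rw [dif_neg hP]
      apply Finset.sum_eq_zero
      intro a _
      rw [if_neg]
      intro hc
      exact hP ⟨by omega, by omega⟩

lemma key (k h : ℕ) [NeZero n] (hk : 1 ≤ k) (hkh : k < h) (h2k : h ≤ 2 * k) (hn : h ≤ n) :
    Lmat n k 0 (h - k) * (Mmat n k * Lmat n k 1 (h - k)) = Mmat n h := by
  have hb : (h - k) + k ≤ n := by omega
  ext i j
  rw [Lmat_mul_apply, mul_Lmat_apply _ _ _ hb, mul_Lmat_apply _ _ _ hb]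
  simp only [Mmat, Fin.ext_iff, Fin.val_zero, zero_add]
  split_ifs <;> first | rfl | decide | omega

/-- explicit pair list for a layer -/
def plist (n k : ℕ) : ℕ → ℕ → List (Fin n × Fin n)
  | _, 0 => []
  | lo, (len+1) =>
    if h : lo < n ∧ lo + k < n then
      ((⟨lo, h.1⟩ : Fin n), (⟨lo + k, h.2⟩ : Fin n)) :: plist n k (lo+1) len
    else []

lemma plist_mem (k : ℕ) : ∀ len lo, ∀ p ∈ plist n k lo len,
    lo ≤ p.1.val ∧ p.1.val < lo + len ∧ p.2.val = p.1.val + k := by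
  intro len
  induction len with
  | zero => intro lo p hp; simp [plist] at hp
  | succ m ih =>
    intro lo p hp
    rw [plist] at hp
    split at hp
    · rcases List.mem_cons.mp hp with rfl | hp'
      · exact ⟨le_rfl, by show lo < lo + (m + 1); omega, rfl⟩
      · have := ih (lo+1) p hp'
        omega
    · simp at hp

lemma plist_pairwise (k : ℕ) (hk : 1 ≤ k) : ∀ len lo, len ≤ k →
    (plist n k lo len).Pairwise
      (fun p q => p.1 ≠ q.1 ∧ p.1 ≠ q.2 ∧ p.2 ≠ q.1 ∧ p.2 ≠ q.2) := by
  intro len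
  induction len with
  | zero => intro lo _; simp [plist]
  | succ m ih =>
    intro lo hlen
    rw [plist]
    split
    · rw [List.pairwise_cons]
      constructor
      · intro q hq
        have hmem := plist_mem k m (lo+1) q hq
        refine ⟨?_, ?_, ?_, ?_⟩ <;>
          (apply Fin.ne_of_val_ne; simp; omega)
      · exact ih (lo+1) (by omega)
    · exact List.Pairwise.nil

lemma plist_prod (k : ℕ) (hk : 1 ≤ k) : ∀ len, len ≤ k → ∀ lo, lo + len + k ≤ n →
    ((plist n k lo len).map (fun p => rowAdd n p.1 p.2)).prod = Lmat n k lo (lo + len) := by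
  intro len
  induction len with
  | zero =>
    intro _ lo _
    show (1 : Matrix (Fin n) (Fin n) (ZMod 2)) = _
    ext i j
    rw [Matrix.one_apply]
    simp only [Lmat]
    have hcond : ¬(lo + k ≤ (i : ℕ) ∧ (i : ℕ) < lo + 0 + k ∧ (i : ℕ) = (j : ℕ) + k) := by omega
    rw [if_neg hcond, add_zero]
  | succ m ih =>
    intro hlen lo hb
    rw [plist, dif_pos (by omega : lo < n ∧ lo + k < n)]
    rw [List.map_cons, List.prod_cons, ih (by omega) (lo+1) (by omega)]
    ext i j
    rw [rowAdd_mul_apply]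
    simp only [Lmat, Fin.ext_iff]
    split_ifs <;> first | rfl | decide | omega

lemma isLayer_Lmat (k lo len : ℕ) (hk : 1 ≤ k) (hlen : len ≤ k) (hb : lo + len + k ≤ n) :
    IsLayer (Lmat n k lo (lo + len)) := by
  refine ⟨plist n k lo len, ?_, plist_pairwise k hk len lo hlen,
    (plist_prod k hk len hlen lo hb).symm⟩
  intro p hp
  have := plist_mem k len lo p hp
  apply Fin.ne_of_val_ne
  omega

lemma build (n : ℕ) [NeZero n] : ∀ h, 0 < h → h ≤ n →
    ∃ Ls : List (Matrix (Fin n) (Fin n) (ZMod 2)),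
      Ls.length ≤ 2 * Nat.clog 2 h - 1 ∧ (∀ L ∈ Ls, IsLayer L) ∧ Ls.prod = Mmat n h := by
  intro h
  induction h using Nat.strong_induction_on with
  | _ h ih =>
  intro h1 hn
  by_cases hh : h = 1
  · subst hh
    refine ⟨[], by simp, by simp, ?_⟩
    rw [List.prod_nil]
    ext i j
    rw [Matrix.one_apply]
    simp only [Mmat, Fin.ext_iff, Fin.val_zero]
    split_ifs <;> first | rfl | decide | omega
  · have h2 : 2 ≤ h := by omega
    set k := (h+1)/2 with hkdef
    have hk1 : 1 ≤ k := by omega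
    have hkh : k < h := by omega
    have h2k : h ≤ 2*k := by omega
    obtain ⟨Lsk, hlen, hlay, hprod⟩ := ih k hkh (by omega) (by omega)
    have hclog : Nat.clog 2 h = Nat.clog 2 k + 1 := by
      have he : (h + 2 - 1) / 2 = k := by omega
      rw [Nat.clog_of_two_le (by norm_num) h2, he]
    have hkey := key (n := n) k h hk1 hkh h2k hn
    have hL3 : IsLayer (Lmat n k 0 (h - k)) := by
      have := isLayer_Lmat (n := n) k 0 (h - k) hk1 (by omega) (by omega)
      simpa using this
    by_cases hsmall : h - k ≤ 1
    · have hL1 : Lmat n k 1 (h - k) = 1 := by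
        ext i j
        rw [Matrix.one_apply]
        simp only [Lmat]
        have hcond : ¬(1 + k ≤ (i : ℕ) ∧ (i : ℕ) < (h - k) + k ∧ (i : ℕ) = (j : ℕ) + k) := by
          omega
        rw [if_neg hcond, add_zero]
      refine ⟨Lmat n k 0 (h - k) :: Lsk, ?_, ?_, ?_⟩
      · simp only [List.length_cons]
        omega
      · intro L hL
        rcases List.mem_cons.mp hL with rfl | hL'
        · exact hL3
        · exact hlay L hL'
      · rw [List.prod_cons, hprod, ← hkey, hL1, mul_one]
    · have hc1 : 1 ≤ Nat.clog 2 k := Nat.clog_pos (by norm_num) (by omega)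
      have hL1 : IsLayer (Lmat n k 1 (h - k)) := by
        have := isLayer_Lmat (n := n) k 1 (h - k - 1) hk1 (by omega) (by omega)
        have he : 1 + (h - k - 1) = h - k := by omega
        rwa [he] at this
      refine ⟨Lmat n k 0 (h - k) :: (Lsk ++ [Lmat n k 1 (h - k)]), ?_, ?_, ?_⟩
      · simp only [List.length_cons, List.length_append, List.length_singleton, List.length_nil]
        omega
      · intro L hL
        rcases List.mem_cons.mp hL with rfl | hL'
        · exact hL3
        · rcases List.mem_append.mp hL' with hL'' | hL''
          · exact hlay L hL''
          · rw [List.mem_singleton.mp hL'']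
            exact hL1
      · rw [List.prod_cons, List.prod_append, List.prod_singleton, hprod, hkey]

end Stmt15Aux

/-- The fan-out matrix `M` over `𝔽₂` (first column and diagonal equal to 1, representing the
circuit of `CNOT_{1,j}`, `j = 2,…,n`) decomposes into at most `2⌈log₂ n⌉ − 1` parallel layers. -/
theorem stmt15 (n : ℕ) [NeZero n]
    (M : Matrix (Fin n) (Fin n) (ZMod 2))
    (hM : M = fun i j => if j = 0 ∨ i = j then 1 else 0) :
    ∃ Ls : List (Matrix (Fin n) (Fin n) (ZMod 2)),
      Ls.length ≤ 2 * Nat.clog 2 n - 1 ∧ (∀ L ∈ Ls, IsLayer L) ∧ Ls.prod = M := by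
  obtain ⟨Ls, h1, h2, h3⟩ := Stmt15Aux.build n n (Nat.pos_of_ne_zero (NeZero.ne n)) le_rfl
  refine ⟨Ls, h1, h2, ?_⟩
  rw [h3, hM]
  ext i j
  simp only [Stmt15Aux.Mmat]
  have : i.val < n := i.isLt
  by_cases hij : i = j <;> by_cases hj0 : j = 0 <;> simp [hij, hj0, this]
end
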